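/- Let B be a commutative ring with unity, f ∈ B[X] a polynomial, and A a subring of B such that the image f(A) = {f(a) : a ∈ A} is finite and, for every minimal prime ideal 𝔭 of B, the reduction of f modulo 𝔭 is not constant on the image of A (i.e., there exist a, a' ∈ A with f(a) − f(a') ∉ 𝔭). Then A is residually finite, and more precisely, for every maximal ideal 𝔪 of A, the residue field A/𝔪 is finite with cardinality at most |f(A)| · deg f. -/
import Mathlib

lemma stmt_7_aux {B : Type*} [CommRing B] (A : Subring B) (f : Polynomial B)
    (hnc : ∀ 𝔭 ∈ minimalPrimes B, ∃ a a' : A, f.eval (a : B) - f.eval (a' : B) ∉ 𝔭)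
    (a : Fin (f.natDegree + 1) → A)
    (hconst : ∀ i, f.eval (a i : B) = f.eval (a 0 : B)) :
    IsNilpotent (∏ x ∈ Finset.univ.offDiag, ((a x.1 : B) - (a x.2 : B))) := by
  classical
  rw [← mem_nilradical]
  have h1 : nilradical B = sInf (minimalPrimes B) := by
    rw [show minimalPrimes B = (⊥ : Ideal B).minimalPrimes from rfl,
      Ideal.sInf_minimalPrimes]
    rfl
  rw [h1, Ideal.mem_sInf]
  intro 𝔭 h𝔭
  haveI hp : 𝔭.IsPrime := h𝔭.1.1
  set c : B := f.eval (a 0 : B)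
  set π : B →+* B ⧸ 𝔭 := Ideal.Quotient.mk 𝔭
  set g : Polynomial (B ⧸ 𝔭) := f.map π - Polynomial.C (π c) with hg
  have hroot : ∀ i, g.IsRoot (π (a i : B)) := by
    intro i
    simp only [hg, Polynomial.IsRoot, Polynomial.eval_sub, Polynomial.eval_C,
      Polynomial.eval_map, Polynomial.eval₂_hom, hconst i, sub_self]
  have hgne : g ≠ 0 := by
    intro h0
    obtain ⟨x, y, hxy⟩ := hnc 𝔭 h𝔭
    have hx := hroot 0
    have hx' : ∀ b : B, π (f.eval b) = π c := by
      intro b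
      have : g.eval (π b) = 0 := by rw [h0]; simp
      simpa only [hg, Polynomial.eval_sub, Polynomial.eval_C, Polynomial.eval_map,
        Polynomial.eval₂_hom, sub_eq_zero] using this
    apply hxy
    rw [← Ideal.Quotient.eq_zero_iff_mem, map_sub, hx' x, hx' y, sub_self]
  have hdeg : g.natDegree ≤ f.natDegree := by
    refine le_trans (Polynomial.natDegree_sub_le _ _) ?_
    simp [Polynomial.natDegree_map_le, Polynomial.natDegree_C]
  -- there exist i ≠ j with π (a i) = π (a j)
  have hex : ∃ i j, i ≠ j ∧ π (a i : B) = π (a j : B) := by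
    by_contra hcon
    push_neg at hcon
    have hinj : Function.Injective (fun i : Fin (f.natDegree + 1) => π (a i : B)) := by
      intro i j hij
      by_contra h
      exact hcon i j h hij
    have hsub : Finset.univ.image (fun i : Fin (f.natDegree + 1) => π (a i : B))
        ⊆ g.roots.toFinset := by
      intro y hy
      obtain ⟨i, _, rfl⟩ := Finset.mem_image.mp hy
      rw [Multiset.mem_toFinset, Polynomial.mem_roots hgne]
      exact hroot i
    have h2 := Finset.card_le_card hsub
    rw [Finset.card_image_of_injective _ hinj, Finset.card_univ, Fintype.card_fin] at h2
    have h3 := (Multiset.toFinset_card_le g.roots).trans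
      ((Polynomial.card_roots' g).trans hdeg)
    omega
  obtain ⟨i, j, hij, hπ⟩ := hex
  have hmem : ((a i : B) - (a j : B)) ∈ 𝔭 := by
    rwa [← Ideal.Quotient.eq_zero_iff_mem, map_sub, sub_eq_zero]
  have hpair : (i, j) ∈ (Finset.univ.offDiag :
      Finset (Fin (f.natDegree + 1) × Fin (f.natDegree + 1))) := by
    simp [Finset.mem_offDiag, hij]
  exact Ideal.mem_of_dvd _ (Finset.dvd_prod_of_mem _ hpair) hmem

/-- **Lemma 2.4.** Let `B` be a commutative ring, `f ∈ B[X]`, and `A` a subring of `B` such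
that `f(A)` is finite and the reduction of `f` modulo any minimal prime of `B` is not constant
on `A`. Then `A` is residually finite with `|A/𝔪| ≤ |f(A)| · deg f` for every maximal ideal
`𝔪` of `A`. -/
theorem stmt_7 {B : Type*} [CommRing B] [Nontrivial B] (A : Subring B) (f : Polynomial B)
    (hfin : (Set.image (fun b => f.eval b) (A : Set B)).Finite)
    (hnc : ∀ 𝔭 ∈ minimalPrimes B, ∃ a a' : A, f.eval (a : B) - f.eval (a' : B) ∉ 𝔭) :
    ∀ 𝔪 : Ideal A, 𝔪.IsMaximal →
      Finite (A ⧸ 𝔪) ∧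
      Nat.card (A ⧸ 𝔪) ≤ Nat.card (Set.image (fun b => f.eval b) (A : Set B)) * f.natDegree := by
  classical
  intro 𝔪 h𝔪
  haveI := h𝔪.isPrime
  set d := f.natDegree with hd
  set S := Set.image (fun b => f.eval b) (A : Set B) with hS
  obtain ⟨σ, hσ⟩ : ∃ σ : A ⧸ 𝔪 → A, ∀ x, Ideal.Quotient.mk 𝔪 (σ x) = x :=
    ⟨Function.surjInv Ideal.Quotient.mk_surjective,
      fun x => Function.surjInv_eq Ideal.Quotient.mk_surjective x⟩
  set G : A ⧸ 𝔪 → B := fun x => f.eval ((σ x : A) : B) with hG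
  have hGS : ∀ x, G x ∈ S := fun x => ⟨(σ x : A), (σ x).2, rfl⟩
  -- key claim
  have key : ∀ (x : Fin (d + 1) → A ⧸ 𝔪), Function.Injective x →
      (∀ i, G (x i) = G (x 0)) → False := by
    intro x hinj hGx
    have hnil := stmt_7_aux A f hnc (fun i => σ (x i)) hGx
    set q : A := ∏ p ∈ Finset.univ.offDiag,
      ((σ (x p.1) : A) - (σ (x p.2) : A)) with hq
    have hcoe : (q : B) = ∏ p ∈ (Finset.univ : Finset (Fin (d+1))).offDiag,
        (((σ (x p.1)) : B) - ((σ (x p.2)) : B)) := by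
      push_cast [hq]
      rfl
    have hqnil : IsNilpotent q := by
      obtain ⟨n, hn⟩ := hnil
      refine ⟨n, ?_⟩
      have : ((q ^ n : A) : B) = 0 := by rw [← hn, ← hcoe]; push_cast; ring
      exact_mod_cast this
    obtain ⟨n, hn⟩ := hqnil
    have hqm : q ∈ 𝔪 := h𝔪.isPrime.mem_of_pow_mem n (by rw [hn]; exact 𝔪.zero_mem)
    rw [hq, Ideal.IsPrime.prod_mem_iff] at hqm
    obtain ⟨p, hp, hpm⟩ := hqm
    have hne := (Finset.mem_offDiag.mp hp).2.2
    apply hne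
    apply hinj
    have h3 : Ideal.Quotient.mk 𝔪 (σ (x p.1)) = Ideal.Quotient.mk 𝔪 (σ (x p.2)) :=
      Ideal.Quotient.eq.mpr hpm
    rwa [hσ, hσ] at h3
  -- finiteness
  have hfib : ∀ c : B, (G ⁻¹' {c}).Finite := by
    intro c
    by_contra hinf
    have hinf' : (G ⁻¹' {c}).Infinite := hinf
    have e := hinf'.natEmbedding
    refine key (fun i => (e i.1 : A ⧸ 𝔪)) ?_ ?_
    · intro i j hij
      exact Fin.val_injective (e.injective (Subtype.val_injective hij))
    · intro i
      have h1 : G ((e i.1 : A ⧸ 𝔪)) = c := (e i.1).2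
      have h2 : G ((e (0 : Fin (d+1)).1 : A ⧸ 𝔪)) = c := (e _).2
      rw [h1, h2]
  have hfinite : Finite (A ⧸ 𝔪) := by
    rw [← Set.finite_univ_iff]
    have : (Set.univ : Set (A ⧸ 𝔪)) ⊆ ⋃ c ∈ S, G ⁻¹' {c} := by
      intro x _
      exact Set.mem_biUnion (hGS x) rfl
    exact Set.Finite.subset (Set.Finite.biUnion hfin (fun c _ => hfib c)) this
  refine ⟨hfinite, ?_⟩
  haveI : Fintype (A ⧸ 𝔪) := Fintype.ofFinite _
  have hcard : Nat.card (A ⧸ 𝔪) = (Finset.univ : Finset (A ⧸ 𝔪)).card := by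
    rw [Nat.card_eq_fintype_card, Finset.card_univ]
  have hfibcard : ∀ c ∈ Finset.univ.image G,
      ((Finset.univ : Finset (A ⧸ 𝔪)).filter (fun x => G x = c)).card ≤ d := by
    intro c _
    by_contra hgt
    push_neg at hgt
    obtain ⟨t, hts, htc⟩ := Finset.exists_subset_card_eq hgt
    set e := (Finset.equivFinOfCardEq htc).symm
    refine key (fun i => (e i).1) ?_ ?_
    · intro i j hij
      exact e.injective (Subtype.val_injective hij)
    · intro i
      have h1 : G (e i).1 = c :=
        (Finset.mem_filter.mp (hts (e i).2)).2
      have h2 : G (e 0).1 = c :=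
        (Finset.mem_filter.mp (hts (e 0).2)).2
      rw [h1, h2]
  have h1 := Finset.card_le_mul_card_image (Finset.univ : Finset (A ⧸ 𝔪)) d hfibcard
  have h2 : (Finset.univ.image G).card ≤ Nat.card S := by
    have hsub : Finset.univ.image G ⊆ hfin.toFinset := by
      intro y hy
      obtain ⟨x, _, rfl⟩ := Finset.mem_image.mp hy
      exact hfin.mem_toFinset.mpr (hGS x)
    calc (Finset.univ.image G).card ≤ hfin.toFinset.card := Finset.card_le_card hsub
      _ = S.ncard := (Set.ncard_eq_toFinset_card S hfin).symm
      _ = Nat.card S := (Nat.card_coe_set_eq S).symm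
  calc Nat.card (A ⧸ 𝔪) = (Finset.univ : Finset (A ⧸ 𝔪)).card := hcard
    _ ≤ d * (Finset.univ.image G).card := h1
    _ ≤ d * Nat.card S := Nat.mul_le_mul_left d h2
    _ = Nat.card S * d := Nat.mul_comm _ _
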